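/- Let A = !![a11, a12; a21, a22] be a real 2×2 matrix with Tr(A) < 0, det(A) > 0, and (a11 > 0 or a22 > 0). Then A is excitable: every complex eigenvalue of A has strictly negative real part, yet there exist real numbers m1 ≥ 0 and m2 ≥ 0 such that A − diag(m1, m2) has a complex eigenvalue with strictly positive real part. -/

import Mathlib

open Matrix Polynomial Real

lemma root_iff_aux (b11 b12 b21 b22 : ℝ) (z : ℂ) :
    ((!![b11, b12; b21, b22].map (algebraMap ℝ ℂ)).charpoly).IsRoot z ↔
    z ^ 2 - (↑b11 + ↑b22) * z + (↑b11 * ↑b22 - ↑b12 * ↑b21) = 0 := by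
  have h : (!![b11, b12; b21, b22].map (algebraMap ℝ ℂ)) =
      !![(b11 : ℂ), (b12 : ℂ); (b21 : ℂ), (b22 : ℂ)] := by
    ext i j; fin_cases i <;> fin_cases j <;> simp
  rw [h, Matrix.charpoly, Matrix.det_fin_two]
  simp only [charmatrix_apply_eq, charmatrix_apply_ne _ _ _ (by decide : (0:Fin 2) ≠ 1),
    charmatrix_apply_ne _ _ _ (by decide : (1:Fin 2) ≠ 0)]
  simp [IsRoot, Matrix.cons_val_zero, Matrix.cons_val_one]
  constructor <;> intro hh <;> linear_combination hh

lemma quad_pos_root (T : ℝ) : ∃ z : ℂ, z ^ 2 - (T : ℂ) * z + (-1 : ℝ) = 0 ∧ 0 < z.re := by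
  set s := Real.sqrt (T ^ 2 + 4) with hs
  have hs2 : s ^ 2 = T ^ 2 + 4 := Real.sq_sqrt (by positivity)
  have habs : |T| < s := by
    rw [← Real.sqrt_sq_eq_abs, hs]
    exact Real.sqrt_lt_sqrt (by positivity) (by linarith)
  have hpos : 0 < (T + s) / 2 := by
    have := neg_abs_le T; linarith
  refine ⟨(((T + s) / 2 : ℝ) : ℂ), ?_, by simpa using hpos⟩
  have hre : ((T + s) / 2) ^ 2 - T * ((T + s) / 2) + (-1) = 0 := by
    linear_combination hs2 / 4
  have h := congrArg (Complex.ofReal) hre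
  push_cast at h ⊢
  linear_combination h

theorem excitable_2x2 (a11 a12 a21 a22 : ℝ)
    (hTr : a11 + a22 < 0) (hDet : 0 < a11 * a22 - a12 * a21)
    (hExc : 0 < a11 ∨ 0 < a22) :
    (∀ z : ℂ, ((!![a11, a12; a21, a22].map (algebraMap ℝ ℂ)).charpoly).IsRoot z → z.re < 0) ∧
    (∃ m1 m2 : ℝ, 0 ≤ m1 ∧ 0 ≤ m2 ∧ ∃ z : ℂ,
      (((!![a11, a12; a21, a22] - Matrix.diagonal ![m1, m2]).map
        (algebraMap ℝ ℂ)).charpoly).IsRoot z ∧ 0 < z.re) := by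
  constructor
  · intro z hz
    rw [root_iff_aux] at hz
    have h1 := congrArg Complex.re hz
    have h2 := congrArg Complex.im hz
    simp [pow_two, Complex.add_re, Complex.add_im, Complex.sub_re, Complex.sub_im,
      Complex.mul_re, Complex.mul_im] at h1 h2
    by_contra hx
    push_neg at hx
    have hy : z.im = 0 := by
      have h3 : z.im * (2 * z.re - (a11 + a22)) = 0 := by linarith [h2]
      rcases mul_eq_zero.mp h3 with h | h
      · exact h
      · exfalso; nlinarith
    rw [hy] at h1
    nlinarith
  · have key : ∀ b11 b12 b21 b22 : ℝ, b11 * b22 - b12 * b21 = -1 →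
        ∃ z : ℂ, ((!![b11, b12; b21, b22].map (algebraMap ℝ ℂ)).charpoly).IsRoot z ∧
          0 < z.re := by
      intro b11 b12 b21 b22 hd
      obtain ⟨z, hz, hzre⟩ := quad_pos_root (b11 + b22)
      refine ⟨z, ?_, hzre⟩
      rw [root_iff_aux]
      have hc : ((b11 * b22 - b12 * b21 : ℝ) : ℂ) = -1 := by rw [hd]; norm_num
      push_cast at hc hz ⊢
      linear_combination hz + hc
    rcases hExc with h | h
    · set m2 := (a11 * a22 - a12 * a21 + 1) / a11 with hm2
      refine ⟨0, m2, le_refl 0, by positivity, ?_⟩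
      have hM : !![a11, a12; a21, a22] - Matrix.diagonal ![(0:ℝ), m2] =
          !![a11, a12; a21, a22 - m2] := by
        ext i j; fin_cases i <;> fin_cases j <;> simp [Matrix.diagonal]
      rw [hM]
      apply key
      have : a11 * m2 = a11 * a22 - a12 * a21 + 1 := by
        rw [hm2]; field_simp [h.ne']
      nlinarith [this]
    · set m1 := (a11 * a22 - a12 * a21 + 1) / a22 with hm1
      refine ⟨m1, 0, by positivity, le_refl 0, ?_⟩
      have hM : !![a11, a12; a21, a22] - Matrix.diagonal ![m1, (0:ℝ)] =
          !![a11 - m1, a12; a21, a22] := by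
        ext i j; fin_cases i <;> fin_cases j <;> simp [Matrix.diagonal]
      rw [hM]
      apply key
      have : a22 * m1 = a11 * a22 - a12 * a21 + 1 := by
        rw [hm1]; field_simp [h.ne']
      nlinarith [this]
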